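/- Let α, β ∈ (0, 0.1) and let C be a concept class over a finite domain X. Suppose there exists a learner A (using public randomness) that is m-sample (α, β/3)-accurate (0.9, 1−β/3)-pseudo-globally stable for C. Then for any ε, δ ∈ (0,1), there exists an (ε,δ)-differentially private (α,β)-accurate user-level learner for C in the central model that uses n = ⌈K·log(1/(δβ))/ε⌉ users for a universal constant K, where each user holds m i.i.d. samples. -/

import Mathlib

open scoped ENNReal

noncomputable section

def pmfPi {β : Type*} : {n : ℕ} → (Fin n → PMF β) → PMF (Fin n → β)
  | 0, _ => PMF.pure Fin.elim0
  | _ + 1, p => (p 0).bind fun b => (pmfPi fun i => p i.succ).bind fun f => PMF.pure (Fin.cons b f)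

def iidPMF {Z : Type*} (D : PMF Z) (m : ℕ) : PMF (Fin m → Z) := pmfPi fun _ => D

def pr {α : Type*} (p : PMF α) (s : Set α) : ℝ≥0∞ := p.toOuterMeasure s

def errD {X : Type*} (D : PMF (X × Bool)) (h : X → Bool) : ℝ≥0∞ := pr D {z | h z.1 ≠ z.2}

def Realizable {X : Type*} (C : Set (X → Bool)) (D : PMF (X × Bool)) : Prop :=
  ∃ f ∈ C, errD D f = 0

/-- neighboring fixed-size datasets: the entire data of (at most) one user is changed -/
def FnNeighbor {n : ℕ} {A : Type*} (u u' : Fin n → A) : Prop :=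
  ∃ i, ∀ j, j ≠ i → u j = u' j

/-- (ε,δ)-DP for mechanisms on fixed-size datasets. -/
def DPfn {n : ℕ} {A O : Type*} (M : (Fin n → A) → PMF O) (ε δ : ℝ) : Prop :=
  ∀ u u', FnNeighbor u u' → ∀ S : Set O,
    pr (M u) S ≤ ENNReal.ofReal (Real.exp ε) * pr (M u') S + ENNReal.ofReal δ

/-- `A` is an m-sample (α,β)-accurate (η,ν)-pseudo-globally stable learner for `C`
with public randomness `ρ`. -/
def PGStable {X R : Type*} (m : ℕ) (α β η ν : ℝ) (C : Set (X → Bool))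
    (ρ : PMF R) (A : (Fin m → X × Bool) → R → PMF (X → Bool)) : Prop :=
  ∀ D : PMF (X × Bool), Realizable C D →
    ∃ hr : R → (X → Bool),
      pr ρ {r | errD D (hr r) ≤ ENNReal.ofReal α} ≥ ENNReal.ofReal (1 - β) ∧
      pr ρ {r | pr ((iidPMF D m).bind fun S => A S r) {h | h = hr r} ≥ ENNReal.ofReal η}
        ≥ ENNReal.ofReal ν

namespace S11

variable {γ γ' O : Type*}

noncomputable def Ex (p : PMF γ) (g : γ → ℝ≥0∞) : ℝ≥0∞ := ∑' x, p x * g x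

lemma Ex_pure (a : γ) (g : γ → ℝ≥0∞) : Ex (PMF.pure a) g = g a := by
  unfold Ex
  rw [tsum_eq_single a (fun b hb => by simp [PMF.pure_apply, hb])]
  simp [PMF.pure_apply]

lemma Ex_bind (p : PMF γ) (f : γ → PMF γ') (g : γ' → ℝ≥0∞) :
    Ex (p.bind f) g = ∑' a, p a * Ex (f a) g := by
  unfold Ex
  simp only [PMF.bind_apply]
  calc ∑' x, (∑' a, p a * f a x) * g x
      = ∑' x, ∑' a, p a * f a x * g x := by simp_rw [ENNReal.tsum_mul_right]
    _ = ∑' a, ∑' x, p a * f a x * g x := ENNReal.tsum_comm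
    _ = ∑' a, p a * ∑' x, f a x * g x := by simp_rw [mul_assoc, ENNReal.tsum_mul_left]

lemma Ex_mono {p : PMF γ} {g g' : γ → ℝ≥0∞} (h : ∀ x, g x ≤ g' x) : Ex p g ≤ Ex p g' :=
  Summable.tsum_le_tsum (fun x => mul_le_mul_right (h x) _) ENNReal.summable ENNReal.summable

lemma Ex_const (p : PMF γ) (c : ℝ≥0∞) : Ex p (fun _ => c) = c := by
  unfold Ex; rw [ENNReal.tsum_mul_right, PMF.tsum_coe, one_mul]

lemma pr_eq_Ex (p : PMF γ) (S : Set γ) : pr p S = Ex p (S.indicator 1) := by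
  rw [pr, PMF.toOuterMeasure_apply]
  refine tsum_congr fun x => ?_
  by_cases hx : x ∈ S <;> simp [Set.indicator, hx]

lemma pr_bind (p : PMF γ) (f : γ → PMF γ') (S : Set γ') :
    pr (p.bind f) S = ∑' a, p a * pr (f a) S := PMF.toOuterMeasure_bind_apply p f S

lemma pr_pure (a : γ) (S : Set γ) : pr (PMF.pure a) S = S.indicator 1 a := by
  rw [pr_eq_Ex, Ex_pure]

lemma pr_le_one (p : PMF γ) (S : Set γ) : pr p S ≤ 1 := by
  rw [pr, PMF.toOuterMeasure_apply]
  calc ∑' x, S.indicator (⇑p) x ≤ ∑' x, p x :=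
        Summable.tsum_le_tsum (fun x => Set.indicator_le_self _ _ x) ENNReal.summable ENNReal.summable
    _ = 1 := p.tsum_coe

lemma pr_mono {p : PMF γ} {S T : Set γ} (h : S ⊆ T) : pr p S ≤ pr p T :=
  p.toOuterMeasure.mono h

lemma pr_singleton (p : PMF γ) (a : γ) : pr p {a} = p a :=
  p.toOuterMeasure_apply_singleton a

lemma pr_add_compl (p : PMF γ) (S : Set γ) : pr p S + pr p Sᶜ = 1 := by
  rw [pr, pr, PMF.toOuterMeasure_apply, PMF.toOuterMeasure_apply, ← ENNReal.tsum_add,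
    ← p.tsum_coe]
  refine tsum_congr fun x => ?_
  by_cases hx : x ∈ S <;> simp [Set.indicator, hx]

lemma pr_compl_le {p : PMF γ} {S : Set γ} {b : ℝ≥0∞} (hb : b ≠ ⊤) (h : b ≤ pr p S) :
    pr p Sᶜ ≤ 1 - b := by
  refine ENNReal.le_sub_of_add_le_left hb ?_
  calc b + pr p Sᶜ ≤ pr p S + pr p Sᶜ := add_le_add_left h _
    _ = 1 := pr_add_compl p S

lemma le_pr_of_compl {p : PMF γ} {S : Set γ} {b : ℝ≥0∞} (h : pr p Sᶜ ≤ b) : 1 - b ≤ pr p S := by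
  have := pr_add_compl p S
  have h2 : (1:ℝ≥0∞) ≤ pr p S + b := by
    rw [← pr_add_compl p S]; exact add_le_add_right h _
  exact tsub_le_iff_right.2 h2

lemma markov (p : PMF γ) (g : γ → ℝ≥0∞) (a : ℝ≥0∞) :
    a * pr p {x | a ≤ g x} ≤ Ex p g := by
  rw [pr, PMF.toOuterMeasure_apply, ← ENNReal.tsum_mul_left]
  refine Summable.tsum_le_tsum (fun x => ?_) ENNReal.summable ENNReal.summable
  by_cases hx : x ∈ {x | a ≤ g x}
  · rw [Set.indicator_of_mem hx]
    calc a * p x = p x * a := mul_comm _ _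
      _ ≤ p x * g x := mul_le_mul_right hx _
  · simp [Set.indicator_of_notMem hx]

lemma Ex_pmfPi : ∀ {n : ℕ} (p : Fin n → PMF γ) (w : Fin n → γ → ℝ≥0∞),
    Ex (pmfPi p) (fun f => ∏ i, w i (f i)) = ∏ i, Ex (p i) (w i)
  | 0, p, w => by simp [pmfPi, Ex_pure]
  | n+1, p, w => by
    have IH := Ex_pmfPi (fun j => p j.succ) (fun j => w j.succ)
    have hun : pmfPi p = (p 0).bind fun b => (pmfPi fun i => p i.succ).bind fun f =>
        PMF.pure (Fin.cons b f) := rfl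
    rw [hun, Ex_bind]
    have hinner : ∀ b : γ, Ex ((pmfPi fun i => p i.succ).bind fun f => PMF.pure (Fin.cons b f))
        (fun f => ∏ i, w i (f i)) = w 0 b * ∏ j : Fin n, Ex (p j.succ) (w j.succ) := by
      intro b
      rw [Ex_bind]
      have h1 : ∀ f : Fin n → γ, Ex (PMF.pure (Fin.cons b f)) (fun f => ∏ i, w i (f i))
          = w 0 b * ∏ j, w j.succ (f j) := by
        intro f
        rw [Ex_pure, Fin.prod_univ_succ]
        simp [Fin.cons_zero, Fin.cons_succ]
      simp_rw [h1]
      rw [← IH]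
      unfold Ex
      rw [← ENNReal.tsum_mul_left]
      exact tsum_congr fun f => by ring
    simp_rw [hinner]
    rw [Fin.prod_univ_succ]
    simp_rw [← mul_assoc]
    rw [ENNReal.tsum_mul_right]
    rfl

lemma pmfPi_bind_pi : ∀ {n : ℕ} (p : Fin n → PMF γ) (κ : Fin n → γ → PMF γ'),
    (pmfPi p).bind (fun u => pmfPi (fun i => κ i (u i))) = pmfPi (fun i => (p i).bind (κ i))
  | 0, p, κ => by
    have h0 : pmfPi p = PMF.pure (Fin.elim0 : Fin 0 → γ) := rfl
    rw [h0, PMF.pure_bind]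
    rfl
  | n+1, p, κ => by
    have IH := pmfPi_bind_pi (fun j => p j.succ) (fun j => κ j.succ)
    have hun : pmfPi p = (p 0).bind fun b => (pmfPi fun i => p i.succ).bind fun f =>
        PMF.pure (Fin.cons b f) := rfl
    have hun2 : pmfPi (fun i => (p i).bind (κ i)) =
        ((p 0).bind (κ 0)).bind fun c => (pmfPi fun j => (p j.succ).bind (κ j.succ)).bind
          fun v => PMF.pure (Fin.cons c v) := rfl
    rw [hun, hun2, PMF.bind_bind, PMF.bind_bind]
    congr 1
    funext b
    simp only [PMF.bind_bind, PMF.pure_bind]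
    have hcons : ∀ f : Fin n → γ, pmfPi (fun i : Fin (n+1) => κ i (Fin.cons (α := fun _ => γ) b f i)) =
        (κ 0 b).bind fun c => (pmfPi fun j : Fin n => κ j.succ (f j)).bind fun v =>
          PMF.pure (Fin.cons c v) := by
      intro f
      have : pmfPi (fun i : Fin (n+1) => κ i (Fin.cons (α := fun _ => γ) b f i)) =
          (κ 0 (Fin.cons (α := fun _ => γ) b f 0)).bind fun c =>
            (pmfPi fun j : Fin n => κ j.succ (Fin.cons (α := fun _ => γ) b f j.succ)).bind fun v =>
              PMF.pure (Fin.cons c v) := rfl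
      rw [this]
      simp only [Fin.cons_zero, Fin.cons_succ]
    simp_rw [hcons]
    rw [← IH]
    simp only [PMF.bind_bind]
    exact PMF.bind_comm _ _ _

/-- mixture bound: identical mixing distribution. -/
lemma mix_bound {p : PMF γ} {x y : γ → ℝ≥0∞} {E D : ℝ≥0∞}
    (h : ∀ a, x a ≤ E * y a + D) :
    ∑' a, p a * x a ≤ E * (∑' a, p a * y a) + D := by
  calc ∑' a, p a * x a ≤ ∑' a, p a * (E * y a + D) :=
        Summable.tsum_le_tsum (fun a => mul_le_mul_right (h a) _) ENNReal.summable ENNReal.summable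
    _ = E * (∑' a, p a * y a) + D * ∑' a, p a := by
        simp_rw [mul_add]
        rw [ENNReal.tsum_add]
        congr 1
        · simp_rw [← mul_assoc, mul_comm _ E, mul_assoc]
          rw [ENNReal.tsum_mul_left]
        · simp_rw [mul_comm _ D]
          rw [ENNReal.tsum_mul_left]
    _ = E * (∑' a, p a * y a) + D := by rw [PMF.tsum_coe, mul_one]

/-- mixture bound: two different mixing distributions, uniform cross bound. -/
lemma mix_bound2 {p q : PMF γ} {x y : γ → ℝ≥0∞} {E D : ℝ≥0∞}
    (h : ∀ a b, x a ≤ E * y b + D) :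
    ∑' a, p a * x a ≤ E * (∑' b, q b * y b) + D := by
  have hconst : ∀ a, x a ≤ E * (∑' b, q b * y b) + D := by
    intro a
    calc x a = ∑' b, q b * x a := by rw [ENNReal.tsum_mul_right, PMF.tsum_coe, one_mul]
      _ ≤ ∑' b, q b * (E * y b + D) :=
          Summable.tsum_le_tsum (fun b => mul_le_mul_right (h a b) _) ENNReal.summable ENNReal.summable
      _ = E * (∑' b, q b * y b) + D := by
          simp_rw [mul_add]
          rw [ENNReal.tsum_add]
          congr 1
          · simp_rw [← mul_assoc, mul_comm _ E, mul_assoc]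
            rw [ENNReal.tsum_mul_left]
          · simp_rw [mul_comm _ D]
            rw [ENNReal.tsum_mul_left, PMF.tsum_coe, mul_one]
  calc ∑' a, p a * x a ≤ ∑' a, p a * (E * (∑' b, q b * y b) + D) :=
        Summable.tsum_le_tsum (fun a => mul_le_mul_right (hconst a) _) ENNReal.summable ENNReal.summable
    _ = (E * (∑' b, q b * y b) + D) * ∑' a, p a := by
        simp_rw [mul_comm _ (E * _ + D)]
        rw [ENNReal.tsum_mul_left]
    _ = _ := by rw [PMF.tsum_coe, mul_one]

lemma dp_pmfPi : ∀ {n : ℕ} (E D : ℝ≥0∞) (p q : Fin n → PMF γ) (i0 : Fin n)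
    (_hpq : ∀ j, j ≠ i0 → p j = q j) (Φ : (Fin n → γ) → PMF O) (S : Set O)
    (_hΦ : ∀ c c' : Fin n → γ, (∀ j, j ≠ i0 → c j = c' j) →
      pr (Φ c) S ≤ E * pr (Φ c') S + D),
    pr ((pmfPi p).bind Φ) S ≤ E * pr ((pmfPi q).bind Φ) S + D
  | 0, E, D, p, q, i0, hpq, Φ, S, hΦ => i0.elim0
  | n+1, E, D, p, q, i0, hpq, Φ, S, hΦ => by
    have hup : (pmfPi p).bind Φ = (p 0).bind fun b =>
        (pmfPi fun i => p i.succ).bind fun f => Φ (Fin.cons b f) := by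
      have : pmfPi p = (p 0).bind fun b => (pmfPi fun i => p i.succ).bind fun f =>
          PMF.pure (Fin.cons b f) := rfl
      rw [this]
      simp only [PMF.bind_bind, PMF.pure_bind]
    have huq : (pmfPi q).bind Φ = (q 0).bind fun b =>
        (pmfPi fun i => q i.succ).bind fun f => Φ (Fin.cons b f) := by
      have : pmfPi q = (q 0).bind fun b => (pmfPi fun i => q i.succ).bind fun f =>
          PMF.pure (Fin.cons b f) := rfl
      rw [this]
      simp only [PMF.bind_bind, PMF.pure_bind]
    rw [hup, huq, pr_bind, pr_bind]
    induction i0 using Fin.cases with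
    | zero =>
        have htail : (fun i : Fin n => p i.succ) = fun i => q i.succ := by
          funext i
          exact hpq i.succ (Fin.succ_ne_zero i)
        rw [htail]
        refine mix_bound2 fun b b' => ?_
        rw [pr_bind, pr_bind]
        refine mix_bound fun f => ?_
        refine hΦ _ _ fun j hj => ?_
        rcases Fin.eq_zero_or_eq_succ j with rfl | ⟨j', rfl⟩
        · exact absurd rfl hj
        · simp [Fin.cons_succ]
    | succ i0' =>
        have hhead : p 0 = q 0 := hpq 0 (Ne.symm (Fin.succ_ne_zero i0'))
        rw [hhead]
        refine mix_bound fun b => ?_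
        exact dp_pmfPi E D (fun j => p j.succ) (fun j => q j.succ) i0'
          (fun j hj => hpq j.succ (fun h => hj (Fin.succ_injective _ h)))
          (fun f => Φ (Fin.cons b f)) S
          (fun c c' hcc => hΦ _ _ (fun j hj => by
            rcases Fin.eq_zero_or_eq_succ j with rfl | ⟨j', rfl⟩
            · simp [Fin.cons_zero]
            · simp only [Fin.cons_succ]
              exact hcc j' (fun h => hj (by rw [h]))))

/-! ### The Laplace-CDF style acceptance probability -/

noncomputable def qt (e x : ℝ) : ℝ := if x ≤ 0 then Real.exp (e*x)/2 else 1 - Real.exp (-(e*x))/2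

lemma qt_nonneg {e x : ℝ} (he : 0 < e) : 0 ≤ qt e x := by
  unfold qt
  split_ifs with h
  · positivity
  · push_neg at h
    have : Real.exp (-(e*x)) ≤ 1 := Real.exp_le_one_iff.2 (by nlinarith)
    linarith

lemma qt_le_one {e x : ℝ} (he : 0 < e) : qt e x ≤ 1 := by
  unfold qt
  split_ifs with h
  · have : Real.exp (e*x) ≤ 1 := Real.exp_le_one_iff.2 (by nlinarith)
    linarith
  · have : 0 < Real.exp (-(e*x)) := Real.exp_pos _
    linarith

lemma qt_mono {e x y : ℝ} (he : 0 < e) (hxy : x ≤ y) : qt e x ≤ qt e y := by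
  unfold qt
  split_ifs with h1 h2
  · have := Real.exp_le_exp.2 (show e*x ≤ e*y by nlinarith)
    linarith
  · push_neg at h2
    have h3 : Real.exp (e*x) ≤ 1 := Real.exp_le_one_iff.2 (by nlinarith)
    have h4 : Real.exp (-(e*y)) ≤ 1 := Real.exp_le_one_iff.2 (by nlinarith)
    linarith
  · push_neg at h1; nlinarith
  · have := Real.exp_le_exp.2 (show -(e*y) ≤ -(e*x) by nlinarith)
    linarith

lemma qt_step_up {e x : ℝ} (he : 0 < e) : qt e (x+1) ≤ Real.exp e * qt e x := by
  have hu1 : 1 ≤ Real.exp e := Real.one_le_exp he.le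
  set u := Real.exp e with hu
  set a := Real.exp (e*x) with ha
  set b := Real.exp (-(e*x)) with hb
  set c := Real.exp (-(e*(x+1))) with hc
  have hu0 : (0:ℝ) < u := Real.exp_pos _
  have ha0 : (0:ℝ) < a := Real.exp_pos _
  have hb0 : (0:ℝ) < b := Real.exp_pos _
  have hc0 : (0:ℝ) < c := Real.exp_pos _
  have F1 : a * u = Real.exp (e*(x+1)) := by
    rw [ha, hu, ← Real.exp_add]; congr 1; ring
  have F2 : a * b = 1 := by rw [ha, hb, ← Real.exp_add]; rw [show e*x + -(e*x) = 0 by ring, Real.exp_zero]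
  have F3 : c * u = b := by rw [hc, hu, hb, ← Real.exp_add]; congr 1; ring
  unfold qt
  split_ifs with h1 h2
  · -- x+1 ≤ 0, x ≤ 0
    rw [← F1]; nlinarith
  · -- x+1 ≤ 0, x > 0 : impossible
    push_neg at h2; nlinarith
  · -- x+1 > 0, x ≤ 0 : 1 - c/2 ≤ u * (a/2)
    have hcau : a * u * c = 1 := by
      calc a * u * c = a * (c * u) := by ring
        _ = a * b := by rw [F3]
        _ = 1 := F2
    nlinarith [sq_nonneg (a*u - 1), mul_pos ha0 hu0]
  · -- x+1 > 0, x > 0 : 1 - c/2 ≤ u * (1 - b/2)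
    push_neg at h1
    have hb1 : b ≤ 1 := by
      rw [hb]; exact Real.exp_le_one_iff.2 (by nlinarith)
    have hc1 : c ≤ 1 := by
      rw [hc]; exact Real.exp_le_one_iff.2 (by nlinarith)
    have key : (0:ℝ) ≤ (u - 1) * (2 - c*u - c) := by
      apply mul_nonneg (by linarith)
      have : c * u = b := F3
      nlinarith
    nlinarith [F3]

lemma qt_step_down {e x : ℝ} (he : 0 < e) :
    1 - qt e x ≤ Real.exp e * (1 - qt e (x+1)) := by
  have hu1 : 1 ≤ Real.exp e := Real.one_le_exp he.le
  set u := Real.exp e with hu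
  set a := Real.exp (e*x) with ha
  set b := Real.exp (-(e*x)) with hb
  set c := Real.exp (-(e*(x+1))) with hc
  have hu0 : (0:ℝ) < u := Real.exp_pos _
  have ha0 : (0:ℝ) < a := Real.exp_pos _
  have hb0 : (0:ℝ) < b := Real.exp_pos _
  have hc0 : (0:ℝ) < c := Real.exp_pos _
  have F1 : a * u = Real.exp (e*(x+1)) := by
    rw [ha, hu, ← Real.exp_add]; congr 1; ring
  have F2 : a * b = 1 := by rw [ha, hb, ← Real.exp_add]; rw [show e*x + -(e*x) = 0 by ring, Real.exp_zero]
  have F3 : c * u = b := by rw [hc, hu, hb, ← Real.exp_add]; congr 1; ring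
  unfold qt
  split_ifs with h1 h2
  · -- x ≤ 0, x+1 ≤ 0 : 1 - a/2 ≤ u * (1 - exp(e(x+1))/2)
    rw [← F1]
    have hau1 : a * u ≤ 1 := by
      rw [F1]; exact Real.exp_le_one_iff.2 (by nlinarith)
    have ha1 : a ≤ 1 := by
      rw [ha]; exact Real.exp_le_one_iff.2 (by nlinarith)
    have key : (0:ℝ) ≤ (u - 1) * (2 - a*u - a) := by
      apply mul_nonneg (by linarith) (by nlinarith)
    nlinarith
  · -- x ≤ 0, x+1 > 0 : 1 - a/2 ≤ u * (1 - (1 - c/2)) = u * (c/2)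
    have : u * (1 - (1 - c/2)) = u * c / 2 := by ring
    nlinarith [F3, F2, sq_nonneg (a-1)]
  · -- x > 0, x+1 ≤ 0 : impossible
    push_neg at h1; nlinarith
  · -- x > 0, x+1 > 0 : b/2 ≤ u * c/2
    have : u * c = b := by rw [mul_comm]; exact F3
    nlinarith

lemma qt_top {e x : ℝ} (he : 0 < e) (hx : 0 ≤ x) : 1 - qt e x ≤ Real.exp (-(e*x))/2 := by
  unfold qt
  split_ifs with h
  · have hx0 : x = 0 := le_antisymm h hx
    subst hx0
    rw [mul_zero, neg_zero, Real.exp_zero]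
    norm_num
  · linarith

lemma qt_bot {e x : ℝ} (hx : x ≤ 0) : qt e x = Real.exp (e*x)/2 := by
  unfold qt
  rw [if_pos hx]

/-! ### The aggregation mechanism -/

open scoped Classical

section Mech

variable {X : Type} [Fintype X] {nn : ℕ} {er dr : ℝ}

noncomputable def cnt (c : Fin nn → (X → Bool)) (h : X → Bool) : ℕ :=
  (Finset.univ.filter fun i => c i = h).card

noncomputable def TT (nn : ℕ) (er dr : ℝ) : ℝ := nn/2 + 1 + Real.log (1/dr)/er

noncomputable def qv (nn : ℕ) (er dr : ℝ) (k : ℕ) : ℝ := qt er (k - TT nn er dr)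

noncomputable def qe (nn : ℕ) (er dr : ℝ) (k : ℕ) : ℝ≥0∞ := ENNReal.ofReal (qv nn er dr k) ⊓ 1

lemma qe_le_one {k : ℕ} : qe nn er dr k ≤ 1 := inf_le_right

lemma qe_eq (he : 0 < er) (k : ℕ) : qe nn er dr k = ENNReal.ofReal (qv nn er dr k) :=
  inf_eq_left.2 (ENNReal.ofReal_le_one.2 (qt_le_one he))

def dflt (X : Type) : X → Bool := fun _ => false

noncomputable def Sel (nn : ℕ) (er dr : ℝ) (c : Fin nn → (X → Bool)) : PMF (X → Bool) :=
  if hM : ∃ h, nn < 2 * cnt c h then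
    (PMF.bernoulli (qe nn er dr (cnt c hM.choose)).toNNReal
      ((ENNReal.toNNReal_mono ENNReal.one_ne_top qe_le_one).trans_eq ENNReal.toNNReal_one)).bind fun b =>
      PMF.pure (if b then hM.choose else dflt X)
  else PMF.pure (dflt X)

lemma cnt_le (c : Fin nn → (X → Bool)) (h : X → Bool) : cnt c h ≤ nn := by
  unfold cnt
  calc (Finset.univ.filter fun i => c i = h).card ≤ Finset.univ.card :=
        Finset.card_le_card (Finset.filter_subset _ _)
    _ = nn := by simp

lemma cnt_disjoint {c : Fin nn → (X → Bool)} {h h' : X → Bool} (hne : h ≠ h') :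
    cnt c h + cnt c h' ≤ nn := by
  unfold cnt
  have hdisj : Disjoint (Finset.univ.filter fun i => c i = h)
      (Finset.univ.filter fun i => c i = h') := by
    rw [Finset.disjoint_left]
    intro i hi hi'
    rw [Finset.mem_filter] at hi hi'
    exact hne (hi.2 ▸ hi'.2 ▸ rfl)
  calc (Finset.univ.filter fun i => c i = h).card +
        (Finset.univ.filter fun i => c i = h').card
      = ((Finset.univ.filter fun i => c i = h) ∪
          (Finset.univ.filter fun i => c i = h')).card :=
        (Finset.card_union_of_disjoint hdisj).symm
    _ ≤ Finset.univ.card := Finset.card_le_card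
        (Finset.union_subset (Finset.filter_subset _ _) (Finset.filter_subset _ _))
    _ = nn := by simp

lemma maj_unique {c : Fin nn → (X → Bool)} {h h' : X → Bool}
    (hm : nn < 2 * cnt c h) (hm' : nn < 2 * cnt c h') : h = h' := by
  by_contra hne
  have := cnt_disjoint (c := c) hne
  omega

lemma cnt_neighbor {i0 : Fin nn} {c c' : Fin nn → (X → Bool)}
    (hcc : ∀ j, j ≠ i0 → c j = c' j) (h : X → Bool) : cnt c h ≤ cnt c' h + 1 := by
  unfold cnt
  have hsub : (Finset.univ.filter fun i => c i = h) ⊆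
      insert i0 (Finset.univ.filter fun i => c' i = h) := by
    intro i hi
    rw [Finset.mem_filter] at hi
    by_cases hii : i = i0
    · subst hii; exact Finset.mem_insert_self _ _
    · refine Finset.mem_insert_of_mem ?_
      rw [Finset.mem_filter]
      exact ⟨Finset.mem_univ i, (hcc i hii) ▸ hi.2⟩
  calc (Finset.univ.filter fun i => c i = h).card
      ≤ (insert i0 (Finset.univ.filter fun i => c' i = h)).card := Finset.card_le_card hsub
    _ ≤ (Finset.univ.filter fun i => c' i = h).card + 1 := Finset.card_insert_le _ _

lemma pr_Sel_of_maj {c : Fin nn → (X → Bool)} {h : X → Bool}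
    (hm : nn < 2 * cnt c h) (S : Set (X → Bool)) :
    pr (Sel nn er dr c) S = qe nn er dr (cnt c h) * S.indicator 1 h
      + (1 - qe nn er dr (cnt c h)) * S.indicator 1 (dflt X) := by
  have hM : ∃ h, nn < 2 * cnt c h := ⟨h, hm⟩
  have hch : hM.choose = h := maj_unique hM.choose_spec hm
  unfold Sel
  rw [dif_pos hM, pr_bind, tsum_bool]
  have hqt : ∀ k, ((qe nn er dr k).toNNReal : ℝ≥0∞) = qe nn er dr k := fun k =>
    ENNReal.coe_toNNReal (ne_top_of_le_ne_top ENNReal.one_ne_top qe_le_one)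
  simp only [PMF.bernoulli_apply, pr_pure, hch, Bool.cond_true, Bool.cond_false,
    ENNReal.coe_sub, ENNReal.coe_one, hqt]
  simp only [cond_false, cond_true, if_true, if_false]
  norm_num
  ring

lemma pr_Sel_of_nomaj {c : Fin nn → (X → Bool)}
    (hM : ¬∃ h, nn < 2 * cnt c h) (S : Set (X → Bool)) :
    pr (Sel nn er dr c) S = S.indicator 1 (dflt X) := by
  unfold Sel
  rw [dif_neg hM, pr_pure]

lemma ind_le_one (S : Set (X → Bool)) (x : X → Bool) : S.indicator 1 x ≤ (1:ℝ≥0∞) := by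
  by_cases hx : x ∈ S <;> simp [Set.indicator, hx]

lemma ind_le_mix {q : ℝ≥0∞} (hq : q ≤ 1) (S : Set (X → Bool)) (x : X → Bool) :
    S.indicator 1 x ≤ (1 - q) * S.indicator 1 x + q := by
  by_cases hx : x ∈ S
  · simp only [Set.indicator_of_mem hx, Pi.one_apply, mul_one]
    rw [tsub_add_cancel_of_le hq]
  · simp [Set.indicator_of_notMem hx]

lemma qe_small (he : 0 < er) (hd0 : 0 < dr) (hd1 : dr ≤ 1) {k : ℕ}
    (hk : 2 * k ≤ nn + 2) : qe nn er dr k ≤ ENNReal.ofReal (dr/2) := by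
  rw [qe_eq he]
  refine ENNReal.ofReal_le_ofReal ?_
  have hlog : 0 ≤ Real.log (1/dr) := by
    apply Real.log_nonneg
    rw [le_div_iff₀ hd0]; linarith
  have hx : (k:ℝ) - TT nn er dr ≤ -(Real.log (1/dr)/er) := by
    unfold TT
    have : (k:ℝ) ≤ nn/2 + 1 := by
      have : (2*k : ℝ) ≤ (nn:ℝ) + 2 := by exact_mod_cast hk
      linarith
    linarith
  have hx0 : (k:ℝ) - TT nn er dr ≤ 0 :=
    le_trans hx (neg_nonpos.2 (div_nonneg hlog he.le))
  unfold qv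
  rw [qt_bot hx0]
  have : Real.exp (er * ((k:ℝ) - TT nn er dr)) ≤ Real.exp (-(Real.log (1/dr))) := by
    apply Real.exp_le_exp.2
    calc er * ((k:ℝ) - TT nn er dr) ≤ er * (-(Real.log (1/dr)/er)) := by
          exact mul_le_mul_of_nonneg_left hx he.le
      _ = -(Real.log (1/dr)) := by
          rw [mul_neg, mul_comm er (Real.log (1/dr)/er), div_mul_cancel₀ _ (ne_of_gt he)]
  have hexp : Real.exp (-(Real.log (1/dr))) = dr := by
    rw [one_div, Real.log_inv, neg_neg, Real.exp_log hd0]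
  linarith

lemma qe_step_up (he : 0 < er) {k k' : ℕ} (hk : k ≤ k' + 1) :
    qe nn er dr k ≤ ENNReal.ofReal (Real.exp er) * qe nn er dr k' := by
  rw [qe_eq he, qe_eq he, ← ENNReal.ofReal_mul (Real.exp_pos er).le]
  refine ENNReal.ofReal_le_ofReal ?_
  rcases Nat.lt_or_ge k (k'+1) with hlt | hge
  · have h1 : qv nn er dr k ≤ qv nn er dr k' :=
      qt_mono he (by
        have : (k:ℝ) ≤ (k':ℝ) := by exact_mod_cast Nat.lt_succ_iff.1 hlt
        linarith)
    have h0 : 0 ≤ qv nn er dr k' := by unfold qv; exact qt_nonneg he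
    have h2 : qv nn er dr k' ≤ Real.exp er * qv nn er dr k' := by
      nlinarith [Real.one_le_exp he.le]
    exact le_trans h1 h2
  · have hkk : k = k' + 1 := le_antisymm hk hge
    subst hkk
    have : ((k' + 1 : ℕ):ℝ) - TT nn er dr = ((k':ℝ) - TT nn er dr) + 1 := by push_cast; ring
    unfold qv
    rw [this]
    exact qt_step_up he

lemma qe_step_down (he : 0 < er) {k k' : ℕ} (hk : k' ≤ k + 1) :
    1 - qe nn er dr k ≤ ENNReal.ofReal (Real.exp er) * (1 - qe nn er dr k') := by
  rw [qe_eq he, qe_eq he]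
  have hsub : ∀ j : ℕ, (1:ℝ≥0∞) - ENNReal.ofReal (qv nn er dr j)
      = ENNReal.ofReal (1 - qv nn er dr j) := by
    intro j
    rw [ENNReal.ofReal_sub _ (show (0:ℝ) ≤ qv nn er dr j from qt_nonneg he), ENNReal.ofReal_one]
  rw [hsub, hsub, ← ENNReal.ofReal_mul (Real.exp_pos er).le]
  refine ENNReal.ofReal_le_ofReal ?_
  rcases Nat.lt_or_ge k' (k+1) with hlt | hge
  · have h1 : qv nn er dr k' ≤ qv nn er dr k :=
      qt_mono he (by
        have : (k':ℝ) ≤ (k:ℝ) := by exact_mod_cast Nat.lt_succ_iff.1 hlt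
        linarith)
    have h2 : (0:ℝ) ≤ 1 - qv nn er dr k' := by
      have := qt_le_one (x := (k':ℝ) - TT nn er dr) he
      unfold qv; linarith
    nlinarith [Real.one_le_exp he.le]
  · have hkk : k' = k + 1 := le_antisymm hk hge
    subst hkk
    have hcast : ((k + 1 : ℕ):ℝ) - TT nn er dr = ((k:ℝ) - TT nn er dr) + 1 := by push_cast; ring
    unfold qv
    rw [hcast]
    exact qt_step_down he

lemma dp_Sel (he : 0 < er) (hd0 : 0 < dr) (hd1 : dr ≤ 1)
    (i0 : Fin nn) (c c' : Fin nn → (X → Bool)) (hcc : ∀ j, j ≠ i0 → c j = c' j)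
    (S : Set (X → Bool)) :
    pr (Sel nn er dr c) S ≤ ENNReal.ofReal (Real.exp er) * pr (Sel nn er dr c') S
      + ENNReal.ofReal dr := by
  have hcc' : ∀ j, j ≠ i0 → c' j = c j := fun j hj => (hcc j hj).symm
  have hE1 : (1:ℝ≥0∞) ≤ ENNReal.ofReal (Real.exp er) :=
    ENNReal.one_le_ofReal.2 (Real.one_le_exp he.le)
  have hhalf : ENNReal.ofReal (dr/2) + ENNReal.ofReal (dr/2) = ENNReal.ofReal dr := by
    rw [← ENNReal.ofReal_add (by positivity) (by positivity)]
    norm_num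
  by_cases hMc : ∃ h, nn < 2 * cnt c h
  · obtain ⟨h, hm⟩ := hMc
    by_cases hMc' : ∃ h', nn < 2 * cnt c' h'
    · obtain ⟨h', hm'⟩ := hMc'
      rw [pr_Sel_of_maj hm S, pr_Sel_of_maj hm' S]
      by_cases hhh : h = h'
      · subst hhh
        have hk1 : cnt c h ≤ cnt c' h + 1 := cnt_neighbor hcc h
        have hk2 : cnt c' h ≤ cnt c h + 1 := cnt_neighbor hcc' h
        have q1 := qe_step_up (nn := nn) (dr := dr) he hk1
        have q2 := qe_step_down (nn := nn) (dr := dr) he hk2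
        calc qe nn er dr (cnt c h) * S.indicator 1 h
              + (1 - qe nn er dr (cnt c h)) * S.indicator 1 (dflt X)
            ≤ (ENNReal.ofReal (Real.exp er) * qe nn er dr (cnt c' h)) * S.indicator 1 h
              + (ENNReal.ofReal (Real.exp er) * (1 - qe nn er dr (cnt c' h)))
                * S.indicator 1 (dflt X) :=
              add_le_add (mul_le_mul_left q1 _) (mul_le_mul_left q2 _)
          _ = ENNReal.ofReal (Real.exp er) * (qe nn er dr (cnt c' h) * S.indicator 1 h
              + (1 - qe nn er dr (cnt c' h)) * S.indicator 1 (dflt X)) := by ring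
          _ ≤ _ := le_self_add
      · -- different majorities: both counts small
        have d1 : cnt c' h' ≤ cnt c h' + 1 := cnt_neighbor hcc' h'
        have d2 : cnt c h ≤ cnt c' h + 1 := cnt_neighbor hcc h
        have s1 : cnt c h + cnt c h' ≤ nn := cnt_disjoint hhh
        have s2 : cnt c' h + cnt c' h' ≤ nn := cnt_disjoint hhh
        have hsm1 : 2 * cnt c h ≤ nn + 2 := by omega
        have hsm2 : 2 * cnt c' h' ≤ nn + 2 := by omega
        have hq := qe_small (nn := nn) he hd0 hd1 hsm1
        have hq' := qe_small (nn := nn) he hd0 hd1 hsm2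
        calc qe nn er dr (cnt c h) * S.indicator 1 h
              + (1 - qe nn er dr (cnt c h)) * S.indicator 1 (dflt X)
            ≤ ENNReal.ofReal (dr/2) * 1 + 1 * S.indicator 1 (dflt X) :=
              add_le_add (mul_le_mul' hq (ind_le_one S h))
                (mul_le_mul_left (tsub_le_self.trans le_rfl) _)
          _ = ENNReal.ofReal (dr/2) + S.indicator 1 (dflt X) := by rw [mul_one, one_mul]
          _ ≤ ENNReal.ofReal (dr/2) + ((1 - qe nn er dr (cnt c' h')) * S.indicator 1 (dflt X)
              + qe nn er dr (cnt c' h')) := by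
              exact add_le_add_right (ind_le_mix qe_le_one S (dflt X)) _
          _ ≤ ENNReal.ofReal (dr/2) + ((1 - qe nn er dr (cnt c' h')) * S.indicator 1 (dflt X)
              + ENNReal.ofReal (dr/2)) := by
              exact add_le_add_right (add_le_add_right hq' _) _
          _ = (1 - qe nn er dr (cnt c' h')) * S.indicator 1 (dflt X) + ENNReal.ofReal dr := by
              rw [← hhalf]; ring
          _ ≤ ENNReal.ofReal (Real.exp er) * (qe nn er dr (cnt c' h') * S.indicator 1 h'
              + (1 - qe nn er dr (cnt c' h')) * S.indicator 1 (dflt X)) + ENNReal.ofReal dr := by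
              refine add_le_add_left ?_ _
              calc (1 - qe nn er dr (cnt c' h')) * S.indicator 1 (dflt X)
                  ≤ qe nn er dr (cnt c' h') * S.indicator 1 h'
                    + (1 - qe nn er dr (cnt c' h')) * S.indicator 1 (dflt X) := le_add_self
                _ ≤ _ := le_mul_of_one_le_left' hE1
    · -- majority in c only
      rw [pr_Sel_of_maj hm S, pr_Sel_of_nomaj hMc' S]
      push_neg at hMc'
      have hsm : 2 * cnt c h ≤ nn + 2 := by
        have := hMc' h
        have := cnt_neighbor hcc h
        omega
      have hq := qe_small (nn := nn) he hd0 hd1 hsm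
      calc qe nn er dr (cnt c h) * S.indicator 1 h
            + (1 - qe nn er dr (cnt c h)) * S.indicator 1 (dflt X)
          ≤ ENNReal.ofReal (dr/2) * 1 + 1 * S.indicator 1 (dflt X) :=
            add_le_add (mul_le_mul' hq (ind_le_one S h)) (mul_le_mul_left tsub_le_self _)
        _ = ENNReal.ofReal (dr/2) + S.indicator 1 (dflt X) := by rw [mul_one, one_mul]
        _ ≤ ENNReal.ofReal dr + ENNReal.ofReal (Real.exp er) * S.indicator 1 (dflt X) :=
            add_le_add (ENNReal.ofReal_le_ofReal (by linarith))
              (le_mul_of_one_le_left' hE1)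
        _ = ENNReal.ofReal (Real.exp er) * S.indicator 1 (dflt X) + ENNReal.ofReal dr :=
            add_comm _ _
  · rw [pr_Sel_of_nomaj hMc S]
    by_cases hMc' : ∃ h', nn < 2 * cnt c' h'
    · obtain ⟨h', hm'⟩ := hMc'
      rw [pr_Sel_of_maj hm' S]
      push_neg at hMc
      have hsm' : 2 * cnt c' h' ≤ nn + 2 := by
        have := hMc h'
        have := cnt_neighbor hcc' h'
        omega
      have hq' := qe_small (nn := nn) he hd0 hd1 hsm'
      calc S.indicator 1 (dflt X)
          ≤ (1 - qe nn er dr (cnt c' h')) * S.indicator 1 (dflt X)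
            + qe nn er dr (cnt c' h') := ind_le_mix qe_le_one S (dflt X)
        _ ≤ (1 - qe nn er dr (cnt c' h')) * S.indicator 1 (dflt X) + ENNReal.ofReal dr :=
            add_le_add_right (hq'.trans (ENNReal.ofReal_le_ofReal (by linarith))) _
        _ ≤ ENNReal.ofReal (Real.exp er) * (qe nn er dr (cnt c' h') * S.indicator 1 h'
            + (1 - qe nn er dr (cnt c' h')) * S.indicator 1 (dflt X)) + ENNReal.ofReal dr := by
            refine add_le_add_left ?_ _
            calc (1 - qe nn er dr (cnt c' h')) * S.indicator 1 (dflt X)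
                ≤ qe nn er dr (cnt c' h') * S.indicator 1 h'
                  + (1 - qe nn er dr (cnt c' h')) * S.indicator 1 (dflt X) := le_add_self
              _ ≤ _ := le_mul_of_one_le_left' hE1
    · rw [pr_Sel_of_nomaj hMc' S]
      calc S.indicator 1 (dflt X) ≤ ENNReal.ofReal (Real.exp er) * S.indicator 1 (dflt X) :=
            le_mul_of_one_le_left' hE1
        _ ≤ _ := le_self_add

lemma qe_mono (he : 0 < er) {k k' : ℕ} (hk : k ≤ k') : qe nn er dr k ≤ qe nn er dr k' := by
  rw [qe_eq he, qe_eq he]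
  refine ENNReal.ofReal_le_ofReal (qt_mono he ?_)
  have : (k:ℝ) ≤ (k':ℝ) := by exact_mod_cast hk
  linarith

lemma qe_big (he : 0 < er) {b9 : ℝ} (k : ℕ) (hx0 : 0 ≤ (k:ℝ) - TT nn er dr)
    (hbig : Real.exp (-(er * ((k:ℝ) - TT nn er dr))) ≤ 2*b9) :
    ENNReal.ofReal (1 - b9) ≤ qe nn er dr k := by
  rw [qe_eq he]
  apply ENNReal.ofReal_le_ofReal
  have := qt_top (x := (k:ℝ) - TT nn er dr) he hx0
  unfold qv
  linarith

/-- The user-level private mechanism. -/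
noncomputable def Mech (nn : ℕ) (er dr : ℝ) {R : Type} {m : ℕ} (ρ : PMF R)
    (A : (Fin m → X × Bool) → R → PMF (X → Bool)) (u : Fin nn → Fin m → X × Bool) :
    PMF (X → Bool) :=
  ρ.bind fun r => (pmfPi fun i => A (u i) r).bind (Sel nn er dr)

lemma Mech_dp {R : Type} {m : ℕ} (ρ : PMF R) (A : (Fin m → X × Bool) → R → PMF (X → Bool))
    (he : 0 < er) (hd0 : 0 < dr) (hd1 : dr ≤ 1) :
    DPfn (Mech nn er dr ρ A) er dr := by
  rintro u u' ⟨i0, hnb⟩ S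
  unfold Mech
  rw [pr_bind, pr_bind]
  refine mix_bound fun r => ?_
  exact dp_pmfPi _ _ _ _ i0 (fun j hj => by rw [hnb j hj]) _ S
    (fun c c' hcc => dp_Sel he hd0 hd1 i0 c c' hcc S)

lemma pr_union_le (p : PMF γ) (S T : Set γ) : pr p (S ∪ T) ≤ pr p S + pr p T := by
  rw [pr, pr, pr, PMF.toOuterMeasure_apply, PMF.toOuterMeasure_apply,
    PMF.toOuterMeasure_apply, ← ENNReal.tsum_add]
  refine Summable.tsum_le_tsum (fun x => ?_) ENNReal.summable ENNReal.summable
  by_cases hS : x ∈ S <;> by_cases hT : x ∈ T <;>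
    simp [Set.indicator, hS, hT]

lemma Ex_indicator_const (p : PMF γ) (S : Set γ) (q : ℝ≥0∞) :
    Ex p (S.indicator fun _ => q) = q * pr p S := by
  rw [pr_eq_Ex]
  unfold Ex
  rw [← ENNReal.tsum_mul_left]
  refine tsum_congr fun x => ?_
  by_cases hx : x ∈ S <;> simp [Set.indicator, hx] <;> ring

lemma tsum_split (f : γ → ℝ≥0∞) (a : γ) :
    ∑' x, f x = f a + ∑' x, ({a}ᶜ : Set γ).indicator f x := by
  have hsplit : ∀ x, f x = ({a} : Set γ).indicator f x + ({a}ᶜ : Set γ).indicator f x := by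
    intro x
    by_cases hx : x = a
    · subst hx; simp [Set.indicator]
    · simp [Set.indicator, hx]
  calc ∑' x, f x = ∑' x, (({a} : Set γ).indicator f x + ({a}ᶜ : Set γ).indicator f x) :=
        tsum_congr hsplit
    _ = (∑' x, ({a} : Set γ).indicator f x) + ∑' x, ({a}ᶜ : Set γ).indicator f x :=
        ENNReal.tsum_add
    _ = f a + ∑' x, ({a}ᶜ : Set γ).indicator f x := by
        congr 1
        rw [tsum_eq_single a (fun b hb => Set.indicator_of_notMem (by simp [hb]) f)]
        exact Set.indicator_of_mem rfl f

lemma Exw_le_two (μ : PMF (X → Bool)) (h : X → Bool) (hμ : 9/10 ≤ μ h) :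
    Ex μ (fun y => if y = h then 1 else 10) ≤ 2 := by
  have h910 : (9/10 : ℝ≥0∞) + 1/10 = 1 := by
    rw [ENNReal.div_add_div_same]
    have h9 : (9:ℝ≥0∞)+1 = 10 := by norm_num
    rw [h9]
    exact ENNReal.div_self (by norm_num) (by norm_num)
  have h910top : (9/10:ℝ≥0∞) ≠ ⊤ := by simp [ENNReal.div_eq_top]
  have hcompl : (1:ℝ≥0∞) - 9/10 = 1/10 := by
    have hc := ENNReal.add_sub_cancel_left (a := (9/10:ℝ≥0∞)) (b := (1/10:ℝ≥0∞)) h910top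
    rw [h910] at hc
    exact hc
  have htot := tsum_split (fun y => μ y) h
  rw [μ.tsum_coe] at htot
  have hrest' : (∑' y, ({h}ᶜ : Set (X → Bool)).indicator (fun y => μ y) y) ≤ 1/10 := by
    rw [← hcompl]
    refine ENNReal.le_sub_of_add_le_left h910top ?_
    calc (9/10 : ℝ≥0∞) + (∑' y, ({h}ᶜ : Set (X → Bool)).indicator (fun y => μ y) y)
        ≤ μ h + (∑' y, ({h}ᶜ : Set (X → Bool)).indicator (fun y => μ y) y) :=
          add_le_add_left hμ _
      _ = 1 := htot.symm
  unfold Ex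
  rw [tsum_split (fun y => μ y * if y = h then 1 else 10) h]
  have hterm : (μ h * if h = h then (1:ℝ≥0∞) else 10) = μ h := by simp
  rw [hterm]
  have hrest : (∑' y, ({h}ᶜ : Set (X → Bool)).indicator
        (fun y => μ y * if y = h then (1:ℝ≥0∞) else 10) y)
      = (∑' y, ({h}ᶜ : Set (X → Bool)).indicator (fun y => μ y) y) * 10 := by
    rw [← ENNReal.tsum_mul_right]
    refine tsum_congr fun y => ?_
    by_cases hy : y = h
    · subst hy; simp [Set.indicator]
    · rw [Set.indicator_of_mem (by simp [hy]), Set.indicator_of_mem (by simp [hy]),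
        if_neg hy]
  rw [hrest]
  calc μ h + (∑' y, ({h}ᶜ : Set (X → Bool)).indicator (fun y => μ y) y) * 10
      ≤ 1 + (1/10) * 10 := add_le_add (PMF.coe_le_one μ h) (mul_le_mul_left hrest' _)
    _ = 1 + 1 := by rw [ENNReal.div_mul_cancel (by norm_num) (by norm_num)]
    _ = 2 := one_add_one_eq_two

lemma chernoff (μ : PMF (X → Bool)) (h : X → Bool) (hμ : 9/10 ≤ μ h) (j : ℕ) :
    pr (pmfPi (fun _ : Fin nn => μ)) {c | j ≤ (Finset.univ.filter fun i => ¬ (c i = h)).card}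
      ≤ 2^nn / 10^j := by
  set w : (X → Bool) → ℝ≥0∞ := fun y => if y = h then 1 else 10 with hw
  have hprod : ∀ c : Fin nn → (X → Bool),
      (∏ i, w (c i)) = 10 ^ ((Finset.univ.filter fun i => ¬ (c i = h)).card) := by
    intro c
    rw [← Finset.prod_filter_mul_prod_filter_not Finset.univ (fun i => c i = h)]
    have h1 : ∏ i ∈ Finset.univ.filter (fun i => c i = h), w (c i) = 1 :=
      Finset.prod_eq_one fun i hi => by
        rw [hw]
        exact if_pos (Finset.mem_filter.1 hi).2
    have h2 : ∏ i ∈ Finset.univ.filter (fun i => ¬ (c i = h)), w (c i)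
        = 10 ^ ((Finset.univ.filter fun i => ¬ (c i = h)).card) := by
      rw [Finset.prod_congr rfl (fun i hi => ?_), Finset.prod_const]
      rw [hw]
      exact if_neg (Finset.mem_filter.1 hi).2
    rw [h1, h2, one_mul]
  have hEx : Ex (pmfPi fun _ : Fin nn => μ) (fun c => ∏ i, w (c i)) ≤ 2^nn := by
    rw [Ex_pmfPi (fun _ : Fin nn => μ) (fun _ => w)]
    rw [Finset.prod_const, Finset.card_univ, Fintype.card_fin]
    exact pow_le_pow_left' (Exw_le_two μ h hμ) nn
  have hsub : {c : Fin nn → (X → Bool) | j ≤ (Finset.univ.filter fun i => ¬ (c i = h)).card}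
      ⊆ {c | (10:ℝ≥0∞)^j ≤ ∏ i, w (c i)} := by
    intro c hc
    rw [Set.mem_setOf_eq, hprod c]
    exact pow_le_pow_right₀ (by norm_num) hc
  have hmark := markov (pmfPi fun _ : Fin nn => μ) (fun c => ∏ i, w (c i)) ((10:ℝ≥0∞)^j)
  have key : (10:ℝ≥0∞)^j * pr (pmfPi (fun _ : Fin nn => μ))
      {c | j ≤ (Finset.univ.filter fun i => ¬ (c i = h)).card} ≤ 2^nn := by
    calc (10:ℝ≥0∞)^j * pr (pmfPi (fun _ : Fin nn => μ)) _
        ≤ (10:ℝ≥0∞)^j * pr (pmfPi (fun _ : Fin nn => μ)) {c | (10:ℝ≥0∞)^j ≤ ∏ i, w (c i)} :=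
          mul_le_mul_right (pr_mono hsub) _
      _ ≤ Ex (pmfPi fun _ : Fin nn => μ) (fun c => ∏ i, w (c i)) := hmark
      _ ≤ 2^nn := hEx
  rw [ENNReal.le_div_iff_mul_le (Or.inl (by positivity)) (Or.inl (by simp))]
  rw [mul_comm]
  exact key

/-! ### numeric facts -/

lemma exp_two_le : Real.exp 2 ≤ 10 := by
  have h1 := Real.exp_one_lt_d9
  rw [show (2:ℝ) = 1+1 by norm_num, Real.exp_add]
  nlinarith [Real.exp_pos 1]

lemma exp_two_ge : (9/2:ℝ) ≤ Real.exp 2 := by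
  have h1 := Real.exp_one_gt_d9
  rw [show (2:ℝ) = 1+1 by norm_num, Real.exp_add]
  nlinarith [Real.exp_pos 1]

lemma exp_twelve_ge : (72900:ℝ) ≤ Real.exp 12 := by
  have h1 := Real.exp_one_gt_d9
  have h2 : (2.7:ℝ)^12 ≤ (Real.exp 1)^12 :=
    pow_le_pow_left₀ (by norm_num) (by nlinarith) 12
  have h3 : Real.exp 12 = (Real.exp 1)^12 := by
    rw [← Real.exp_nat_mul]
    norm_num
  rw [h3]
  nlinarith [h2]

lemma chern_real {β : ℝ} {N j : ℕ} (hb0 : 0 < β) (hb1 : β ≤ 1) (h3j : N ≤ 3*j + 2)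
    (hN : 60 + 15 * Real.log (1/β) ≤ (N:ℝ)) :
    (2:ℝ)^N ≤ (β/9) * 10^j := by
  have hL : Real.log (1/β) = -Real.log β := by rw [one_div, Real.log_inv]
  -- step A : (4/5)^N ≤ exp (-(N/5))
  have hA : (4/5:ℝ)^N ≤ Real.exp (-((N:ℝ)/5)) := by
    have h45 : (4/5:ℝ) ≤ Real.exp (-(1/5)) := by
      have := Real.add_one_le_exp (-(1/5:ℝ))
      linarith
    have : (4/5:ℝ)^N ≤ (Real.exp (-(1/5)))^N := pow_le_pow_left₀ (by norm_num) h45 N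
    refine le_trans this (le_of_eq ?_)
    rw [← Real.exp_nat_mul]
    congr 1
    ring
  -- step B : exp (-(N/5)) ≤ exp (-12) * β^3
  have hB : Real.exp (-((N:ℝ)/5)) ≤ Real.exp (-12) * β^3 := by
    have hmono : Real.exp (-((N:ℝ)/5)) ≤ Real.exp (-12 + 3*Real.log β) := by
      apply Real.exp_le_exp.2
      rw [hL] at hN
      linarith
    refine le_trans hmono (le_of_eq ?_)
    rw [Real.exp_add]
    congr 1
    rw [show (3:ℝ)*Real.log β = (3:ℕ)*Real.log β by norm_num, Real.exp_nat_mul,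
      Real.exp_log hb0]
  -- step C : 72900 * (4/5)^N ≤ β^3
  have hC : 72900 * (4/5:ℝ)^N ≤ β^3 := by
    have h12 : 72900 * Real.exp (-12) ≤ 1 := by
      have := exp_twelve_ge
      have hpos := Real.exp_pos (12:ℝ)
      rw [Real.exp_neg]
      have hinv : (Real.exp 12)⁻¹ ≤ 1/72900 := by
        rw [inv_eq_one_div]
        exact one_div_le_one_div_of_le (by norm_num) exp_twelve_ge
      nlinarith
    calc (72900:ℝ) * (4/5)^N ≤ 72900 * (Real.exp (-12) * β^3) := by
          nlinarith [hA, hB, pow_nonneg (by norm_num : (0:ℝ) ≤ 4/5) N]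
      _ = (72900 * Real.exp (-12)) * β^3 := by ring
      _ ≤ 1 * β^3 := by nlinarith [pow_nonneg hb0.le 3, h12]
      _ = β^3 := one_mul _
  -- assemble via cubes
  have hcube : ((2:ℝ)^N)^3 ≤ ((β/9) * 10^j)^3 := by
    have e8 : ((2:ℝ)^N)^3 = 8^N := by
      rw [← pow_mul, mul_comm, pow_mul]
      norm_num
    have e10 : ((β/9:ℝ) * 10^j)^3 = (β^3/729) * 1000^j := by
      rw [mul_pow, ← pow_mul, mul_comm j 3, pow_mul]
      norm_num
      ring
    rw [e8, e10]
    have e1 : (10:ℝ)^N ≤ 1000^j * 100 := by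
      have : (10:ℝ)^N ≤ 10^(3*j+2) := pow_le_pow_right₀ (by norm_num) h3j
      refine le_trans this (le_of_eq ?_)
      rw [pow_add, pow_mul]
      norm_num
    have e2 : (4/5:ℝ)^N * 10^N = 8^N := by
      rw [← mul_pow]
      norm_num
    -- 8^N = (4/5)^N * 10^N ≤ (β^3/72900) * 10^N ≤ (β^3/72900) * (1000^j * 100) = β^3/729 * 1000^j
    have h45N : (0:ℝ) ≤ (4/5:ℝ)^N := pow_nonneg (by norm_num) N
    have h10N : (0:ℝ) ≤ (10:ℝ)^N := pow_nonneg (by norm_num) N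
    calc (8:ℝ)^N = (4/5)^N * 10^N := e2.symm
      _ ≤ (β^3/72900) * 10^N := by nlinarith [hC]
      _ ≤ (β^3/72900) * (1000^j * 100) := by
          have hb3 : (0:ℝ) ≤ β^3/72900 := by positivity
          nlinarith [e1]
      _ = (β^3/729) * 1000^j := by ring
  have h2N : (0:ℝ) ≤ (2:ℝ)^N := by positivity
  have hR : (0:ℝ) ≤ (β/9) * 10^j := by positivity
  exact (pow_le_pow_iff_left₀ h2N hR (by norm_num)).1 hcube

lemma ofReal_pt9 : ENNReal.ofReal (0.9:ℝ) = 9/10 := by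
  rw [show (0.9:ℝ) = 9/10 by norm_num, ENNReal.ofReal_div_of_pos (by norm_num)]
  norm_num

lemma haux_one_sub {x : ℝ} (h0 : 0 ≤ x) (h1 : x ≤ 1) :
    (1:ℝ≥0∞) - ENNReal.ofReal (1-x) = ENNReal.ofReal x := by
  have hs : ENNReal.ofReal (1-x) + ENNReal.ofReal x = 1 := by
    rw [← ENNReal.ofReal_add (by linarith) h0]
    norm_num
  rw [← hs, ENNReal.add_sub_cancel_left ENNReal.ofReal_ne_top]

lemma ofReal_one_sub {x : ℝ} (h0 : 0 ≤ x) :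
    ENNReal.ofReal (1-x) = 1 - ENNReal.ofReal x := by
  rw [ENNReal.ofReal_sub _ h0, ENNReal.ofReal_one]

set_option maxHeartbeats 1000000 in
lemma Mech_acc {R : Type} {m : ℕ} {ρ : PMF R} {A : (Fin m → X × Bool) → R → PMF (X → Bool)}
    {C : Set (X → Bool)} {α β : ℝ}
    (hβ0 : 0 < β) (hβ1 : β < 0.1)
    (hPG : PGStable m α (β/3) 0.9 (1 - β/3) C ρ A)
    (he : 0 < er) (he1 : er < 1) (hd0 : 0 < dr) (hd1 : dr < 1)
    (hn : 100 * (Real.log (1/dr) + Real.log (1/β)) ≤ er * nn)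
    (D : PMF (X × Bool)) (hD : Realizable C D) :
    ENNReal.ofReal (1 - β) ≤ pr ((iidPMF (iidPMF D m) nn).bind (Mech nn er dr ρ A))
      {h | errD D h ≤ ENNReal.ofReal α} := by
  have hβ1' : β < 1/10 := by linarith [show (0.1:ℝ) = 1/10 by norm_num]
  have hLd : 0 ≤ Real.log (1/dr) := Real.log_nonneg (by rw [le_div_iff₀ hd0]; linarith)
  have hLb : 2 ≤ Real.log (1/β) := by
    have h10 : (10:ℝ) ≤ 1/β := by rw [le_div_iff₀ hβ0]; linarith
    have hlog10 : (2:ℝ) ≤ Real.log 10 := by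
      rw [Real.le_log_iff_exp_le (by norm_num)]
      exact exp_two_le
    calc (2:ℝ) ≤ Real.log 10 := hlog10
      _ ≤ Real.log (1/β) := Real.log_le_log (by norm_num) h10
  have hnn0 : (0:ℝ) ≤ (nn:ℝ) := Nat.cast_nonneg nn
  have hern : er * nn ≤ (nn:ℝ) := by nlinarith
  have hnR : 100 * (Real.log (1/dr) + Real.log (1/β)) ≤ (nn:ℝ) := le_trans hn hern
  have hnbig : (200:ℝ) ≤ (nn:ℝ) := by nlinarith
  obtain ⟨hr, hacc, hstab⟩ := hPG D hD
  -- pipeline rewriting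
  have hpipe : (iidPMF (iidPMF D m) nn).bind (Mech nn er dr ρ A)
      = ρ.bind fun r =>
          (pmfPi fun _ : Fin nn => ((iidPMF D m).bind fun s => A s r)).bind (Sel nn er dr) := by
    show (pmfPi fun _ : Fin nn => iidPMF D m).bind (Mech nn er dr ρ A) = _
    unfold Mech
    rw [PMF.bind_comm]
    congr 1
    funext r
    rw [← PMF.bind_bind, pmfPi_bind_pi (fun _ : Fin nn => iidPMF D m) (fun _ x => A x r)]
  -- the good set of public random strings
  set G : Set R := {r | errD D (hr r) ≤ ENNReal.ofReal α} ∩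
    {r | pr ((iidPMF D m).bind fun s => A s r) {h | h = hr r} ≥ ENNReal.ofReal 0.9} with hGdef
  have hGc : pr ρ Gᶜ ≤ ENNReal.ofReal (2*β/3) := by
    have hc1 : pr ρ {r | errD D (hr r) ≤ ENNReal.ofReal α}ᶜ ≤ ENNReal.ofReal (β/3) := by
      have := pr_compl_le ENNReal.ofReal_ne_top hacc
      rwa [haux_one_sub (by linarith) (by linarith)] at this
    have hc2 : pr ρ {r | pr ((iidPMF D m).bind fun s => A s r) {h | h = hr r}
        ≥ ENNReal.ofReal 0.9}ᶜ ≤ ENNReal.ofReal (β/3) := by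
      have := pr_compl_le ENNReal.ofReal_ne_top hstab
      rwa [haux_one_sub (by linarith) (by linarith)] at this
    calc pr ρ Gᶜ = pr ρ ({r | errD D (hr r) ≤ ENNReal.ofReal α}ᶜ ∪
          {r | pr ((iidPMF D m).bind fun s => A s r) {h | h = hr r}
            ≥ ENNReal.ofReal 0.9}ᶜ) := by rw [hGdef, Set.compl_inter]
      _ ≤ _ + _ := pr_union_le ρ _ _
      _ ≤ ENNReal.ofReal (β/3) + ENNReal.ofReal (β/3) := add_le_add hc1 hc2
      _ = ENNReal.ofReal (2*β/3) := by
          rw [← ENNReal.ofReal_add (by linarith) (by linarith)]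
          ring_nf
  have hG : ENNReal.ofReal (1 - 2*β/3) ≤ pr ρ G := by
    refine le_trans (le_of_eq (ofReal_one_sub (by linarith))) (le_pr_of_compl hGc)
  -- the count threshold bound
  have hqbig : ∀ k : ℕ, 2*(nn:ℝ)/3 ≤ (k:ℝ) → ENNReal.ofReal (1 - β/9) ≤ qe nn er dr k := by
    intro k hk
    have hx : 2 + Real.log (1/β) ≤ er * ((k:ℝ) - TT nn er dr) := by
      have expand : er * ((k:ℝ) - TT nn er dr)
          = er * k - er*(nn:ℝ)/2 - er - Real.log (1/dr) := by
        unfold TT; field_simp; ring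
      rw [expand]
      have hek : er * (2*(nn:ℝ)/3) ≤ er * k := mul_le_mul_of_nonneg_left hk he.le
      nlinarith
    have hx0 : 0 ≤ (k:ℝ) - TT nn er dr := by nlinarith
    refine qe_big he k hx0 ?_
    have hmono2 : Real.exp (-(er * ((k:ℝ) - TT nn er dr)))
        ≤ Real.exp (-(2 + Real.log (1/β))) := Real.exp_le_exp.2 (by linarith)
    refine le_trans hmono2 ?_
    rw [show -(2 + Real.log (1/β)) = (-2) + (-(Real.log (1/β))) by ring, Real.exp_add]
    have hb : Real.exp (-(Real.log (1/β))) = β := by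
      rw [one_div, Real.log_inv, neg_neg, Real.exp_log hβ0]
    rw [hb]
    have he2 : Real.exp (-2) ≤ 2/9 := by
      rw [Real.exp_neg]
      have h92 := exp_two_ge
      have hpos := Real.exp_pos (2:ℝ)
      have hprod := mul_inv_cancel₀ (ne_of_gt hpos)
      nlinarith [mul_nonneg (sub_nonneg.2 h92) (inv_nonneg.2 hpos.le)]
    nlinarith
  -- the inner accuracy bound for good r
  have hinner : ∀ r ∈ G, ENNReal.ofReal ((1-β/9)*(1-β/9))
      ≤ pr ((pmfPi fun _ : Fin nn => ((iidPMF D m).bind fun s => A s r)).bind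
          (Sel nn er dr)) {h | errD D h ≤ ENNReal.ofReal α} := by
    intro r hrG
    obtain ⟨hracc, hrstab⟩ := hrG
    set μ := (iidPMF D m).bind fun s => A s r with hμdef
    have hμh : 9/10 ≤ μ (hr r) := by
      have hset : {h | h = hr r} = ({hr r} : Set (X → Bool)) := Set.setOf_eq_eq_singleton
      have hstab' : ENNReal.ofReal 0.9 ≤ pr μ {h | h = hr r} := hrstab
      rw [hset, pr_singleton] at hstab'
      rw [← ofReal_pt9]
      exact hstab'
    set bad : Set (Fin nn → (X → Bool)) :=
      {c | nn/3 ≤ (Finset.univ.filter fun i => ¬ (c i = hr r)).card} with hbaddef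
    have hbad : pr (pmfPi fun _ : Fin nn => μ) bad ≤ ENNReal.ofReal (β/9) := by
      refine le_trans (chernoff μ (hr r) hμh (nn/3)) ?_
      rw [ENNReal.div_le_iff (by positivity) (by simp)]
      have hconv : (2:ℝ≥0∞)^nn = ENNReal.ofReal ((2:ℝ)^nn) := by
        rw [ENNReal.ofReal_pow (by norm_num)]
        norm_num
      have hconv10 : (10:ℝ≥0∞)^(nn/3) = ENNReal.ofReal ((10:ℝ)^(nn/3)) := by
        rw [ENNReal.ofReal_pow (by norm_num)]
        norm_num
      rw [hconv, hconv10, ← ENNReal.ofReal_mul (by linarith)]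
      refine ENNReal.ofReal_le_ofReal ?_
      refine chern_real hβ0 (by linarith) (by omega) ?_
      nlinarith
    have hEgood : ENNReal.ofReal (1 - β/9) ≤ pr (pmfPi fun _ : Fin nn => μ) badᶜ := by
      refine le_trans (le_of_eq (ofReal_one_sub (by linarith))) (le_pr_of_compl ?_)
      rwa [compl_compl]
    have hptwise : ∀ c, c ∈ badᶜ →
        ENNReal.ofReal (1-β/9) ≤ pr (Sel nn er dr c) ({hr r} : Set (X → Bool)) := by
      intro c hc
      have hF : (Finset.univ.filter fun i => ¬ (c i = hr r)).card < nn/3 := not_le.1 hc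
      have hsum : cnt c (hr r) + (Finset.univ.filter fun i => ¬ (c i = hr r)).card = nn := by
        unfold cnt
        rw [Finset.card_filter_add_card_filter_not]
        simp
      have hcnt : nn - nn/3 + 1 ≤ cnt c (hr r) := by omega
      have hmaj : nn < 2 * cnt c (hr r) := by omega
      rw [pr_Sel_of_maj hmaj]
      have hind : ({hr r} : Set (X → Bool)).indicator (1 : (X → Bool) → ℝ≥0∞) (hr r) = 1 :=
        Set.indicator_of_mem rfl _
      have hcast : 2*(nn:ℝ)/3 ≤ (cnt c (hr r) : ℝ) := by
        have hj3 : (nn/3 : ℕ) ≤ nn := Nat.div_le_self nn 3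
        have h1 : ((nn - nn/3 + 1 : ℕ):ℝ) ≤ (cnt c (hr r) : ℝ) := by exact_mod_cast hcnt
        have h2 : ((nn - nn/3 + 1 : ℕ):ℝ) = (nn:ℝ) - (nn/3 : ℕ) + 1 := by
          push_cast [Nat.cast_sub hj3]
          ring
        have h3 : ((nn/3 : ℕ):ℝ) ≤ (nn:ℝ)/3 := by
          have := Nat.div_mul_le_self nn 3
          have hc3 : ((nn/3 * 3 : ℕ):ℝ) ≤ (nn:ℝ) := by exact_mod_cast this
          push_cast at hc3
          linarith
        linarith
      calc ENNReal.ofReal (1-β/9) ≤ qe nn er dr (cnt c (hr r)) := hqbig _ hcast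
        _ = qe nn er dr (cnt c (hr r)) * ({hr r} : Set (X → Bool)).indicator 1 (hr r) := by
            rw [hind, mul_one]
        _ ≤ _ := le_self_add
    have hsingle : ({hr r} : Set (X → Bool)) ⊆ {h | errD D h ≤ ENNReal.ofReal α} := by
      intro h hh
      rw [Set.mem_singleton_iff] at hh
      subst hh
      exact hracc
    calc ENNReal.ofReal ((1-β/9)*(1-β/9))
        = ENNReal.ofReal (1-β/9) * ENNReal.ofReal (1-β/9) :=
          ENNReal.ofReal_mul (by linarith)
      _ ≤ ENNReal.ofReal (1-β/9) * pr (pmfPi fun _ : Fin nn => μ) badᶜ :=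
          mul_le_mul_right hEgood _
      _ = Ex (pmfPi fun _ : Fin nn => μ) (badᶜ.indicator fun _ => ENNReal.ofReal (1-β/9)) :=
          (Ex_indicator_const _ _ _).symm
      _ ≤ Ex (pmfPi fun _ : Fin nn => μ) (fun c => pr (Sel nn er dr c) ({hr r} : Set (X → Bool))) := by
          refine Ex_mono fun c => ?_
          by_cases hc : c ∈ badᶜ
          · rw [Set.indicator_of_mem hc]
            exact hptwise c hc
          · rw [Set.indicator_of_notMem hc]
            exact zero_le
      _ = pr ((pmfPi fun _ : Fin nn => μ).bind (Sel nn er dr)) ({hr r} : Set (X → Bool)) :=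
          (pr_bind _ _ _).symm
      _ ≤ _ := pr_mono hsingle
  -- assemble
  rw [hpipe, pr_bind]
  have hreal : (1 - β : ℝ) ≤ (1 - 2*β/3) * ((1-β/9)*(1-β/9)) := by
    have hb2 : (0:ℝ) ≤ β*β := mul_nonneg hβ0.le hβ0.le
    have hb3 : β*β*β ≤ β*β := by nlinarith
    nlinarith [hb2, hb3]
  calc ENNReal.ofReal (1 - β)
      ≤ ENNReal.ofReal ((1 - 2*β/3) * ((1-β/9)*(1-β/9))) := ENNReal.ofReal_le_ofReal hreal
    _ = ENNReal.ofReal ((1-β/9)*(1-β/9)) * ENNReal.ofReal (1 - 2*β/3) := by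
        rw [← ENNReal.ofReal_mul (by nlinarith)]
        ring_nf
    _ ≤ ENNReal.ofReal ((1-β/9)*(1-β/9)) * pr ρ G := mul_le_mul_right hG _
    _ = Ex ρ (G.indicator fun _ => ENNReal.ofReal ((1-β/9)*(1-β/9))) :=
        (Ex_indicator_const _ _ _).symm
    _ ≤ ∑' r, ρ r * pr ((pmfPi fun _ : Fin nn => ((iidPMF D m).bind fun s => A s r)).bind
          (Sel nn er dr)) {h | errD D h ≤ ENNReal.ofReal α} := by
        refine Ex_mono fun r => ?_
        by_cases hrG : r ∈ G
        · rw [Set.indicator_of_mem hrG]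
          exact hinner r hrG
        · rw [Set.indicator_of_notMem hrG]
          exact zero_le

end Mech

end S11

/-- from a pseudo-globally stable learner to an (ε,δ)-DP user-level learner
in the central model with `⌈K·log(1/(δβ))/ε⌉` users. -/
theorem stmt11 :
    ∃ K : ℝ, 0 < K ∧
      ∀ (X : Type) [Fintype X] (C : Set (X → Bool)) (α β : ℝ),
        α ∈ Set.Ioo (0 : ℝ) 0.1 → β ∈ Set.Ioo (0 : ℝ) 0.1 →
        ∀ (m : ℕ) (R : Type) (ρ : PMF R) (A : (Fin m → X × Bool) → R → PMF (X → Bool)),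
          PGStable m α (β / 3) 0.9 (1 - β / 3) C ρ A →
          ∀ ε δ : ℝ, ε ∈ Set.Ioo (0 : ℝ) 1 → δ ∈ Set.Ioo (0 : ℝ) 1 →
          ∀ n : ℕ, n = ⌈K * Real.log (1 / (δ * β)) / ε⌉₊ →
          ∃ M : (Fin n → Fin m → X × Bool) → PMF (X → Bool),
            DPfn M ε δ ∧
            ∀ D : PMF (X × Bool), Realizable C D →
              pr ((iidPMF (iidPMF D m) n).bind M)
                  {h | errD D h ≤ ENNReal.ofReal α} ≥ ENNReal.ofReal (1 - β) := by

  refine ⟨100, by norm_num, ?_⟩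
  intro X _ C α β hα hβ m R ρ A hPG ε δ hε hδ n hn
  refine ⟨S11.Mech n ε δ ρ A, S11.Mech_dp ρ A hε.1 hδ.1 hδ.2.le, ?_⟩
  intro D hD
  refine S11.Mech_acc hβ.1 hβ.2 hPG hε.1 hε.2 hδ.1 hδ.2 ?_ D hD
  have hceil : (100 * Real.log (1/(δ*β)) / ε : ℝ) ≤ (n:ℝ) := by
    rw [hn]; exact Nat.le_ceil _
  have hlogsplit : Real.log (1/(δ*β)) = Real.log (1/δ) + Real.log (1/β) := by
    rw [show (1:ℝ)/(δ*β) = (1/δ)*(1/β) from by rw [div_mul_div_comm, one_mul]]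
    exact Real.log_mul (one_div_ne_zero (ne_of_gt hδ.1)) (one_div_ne_zero (ne_of_gt hβ.1))
  have h1 : 100 * Real.log (1/(δ*β)) ≤ (n:ℝ) * ε := (div_le_iff₀ hε.1).1 hceil
  rw [← hlogsplit]
  linarith [h1]

end
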